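/- Let R be an associative ring with identity, n > 1 a natural number, and g(x) a polynomial with all coefficients in the center C(R) of R. Let T_n(R) denote the ring of n × n upper triangular matrices over R (matrices M with M_{ij} = 0 for j < i), and regard g(x) as a polynomial over T_n(R) by replacing each coefficient a by the scalar matrix a·I (which is central in T_n(R)). If T_n(R) is strongly g(x)-clean, then R is strongly g(x)-clean. -/

import Mathlib

open Polynomial

/-- The subring `T_n(R)` of `n × n` upper triangular matrices over `R`
(matrices `M` with `M i j = 0` whenever `j < i`). -/
def upperTriangularSubring (R : Type*) [Ring R] (n : ℕ) :
    Subring (Matrix (Fin n) (Fin n) R) where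
  carrier := {M | ∀ i j : Fin n, j < i → M i j = 0}
  zero_mem' := fun _ _ _ => rfl
  one_mem' := fun _ _ hij => Matrix.one_apply_ne hij.ne'
  add_mem' := fun hA hB i j hij => by
    simp [Matrix.add_apply, hA i j hij, hB i j hij]
  neg_mem' := fun hA i j hij => by
    simp [Matrix.neg_apply, hA i j hij]
  mul_mem' := fun {A B} hA hB i j hij => by
    rw [Matrix.mul_apply]
    refine Finset.sum_eq_zero fun k _ => ?_
    rcases lt_or_ge k i with h | h
    · rw [hA i k h, zero_mul]
    · rw [hB k j (lt_of_lt_of_le hij h), mul_zero]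

/-- The canonical ring homomorphism `R → T_n(R)` sending `a` to the scalar
matrix `a • I` (which is central in `T_n(R)`). -/
def scalarToUpperTriangular (R : Type*) [Ring R] (n : ℕ) :
    R →+* upperTriangularSubring R n :=
  (Matrix.scalar (Fin n)).codRestrict (upperTriangularSubring R n).toSubsemiring
    (fun r i j hij => Matrix.diagonal_apply_ne _ hij.ne')

/-- Projection onto the `(0,0)` entry is a ring hom on upper triangular matrices. -/
def diagHom (R : Type*) [Ring R] (n : ℕ) (hn : 0 < n) :
    upperTriangularSubring R n →+* R where
  toFun M := M.1 ⟨0, hn⟩ ⟨0, hn⟩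
  map_one' := Matrix.one_apply_eq _
  map_mul' A B := by
    show (A.1 * B.1) _ _ = _
    rw [Matrix.mul_apply]
    refine Finset.sum_eq_single _ (fun k _ hk => ?_) (by simp)
    rw [B.2 k ⟨0, hn⟩ (Fin.lt_def.mpr (Nat.pos_of_ne_zero fun h0 => hk (Fin.ext h0))),
      mul_zero]
  map_zero' := rfl
  map_add' A B := rfl

/-- If the upper triangular matrix ring `T_n(R)` (`n > 1`) is strongly
`g(x)`-clean, where `g` has central coefficients and is regarded over `T_n(R)`
by mapping each coefficient to a scalar matrix, then `R` is strongly
`g(x)`-clean. -/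
theorem strongly_gx_clean_of_upperTriangular (R : Type*) [Ring R] (n : ℕ) (hn : 1 < n)
    (g : Polynomial R) (hg : ∀ i, g.coeff i ∈ Set.center R)
    (hT : ∀ A : upperTriangularSubring R n, ∃ S U : upperTriangularSubring R n,
      (g.map (scalarToUpperTriangular R n)).eval S = 0 ∧ IsUnit U ∧
        A = S + U ∧ S * U = U * S) :
    ∀ r : R, ∃ s u : R, g.eval s = 0 ∧ IsUnit u ∧ r = s + u ∧ s * u = u * s := by
  intro r
  have hn0 : 0 < n := by omega
  let d := diagHom R n hn0
  have hdφ : ∀ a : R, d (scalarToUpperTriangular R n a) = a := fun a => by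
    show (Matrix.scalar (Fin n) a) ⟨0, hn0⟩ ⟨0, hn0⟩ = a
    simp [Matrix.scalar_apply]
  obtain ⟨S, U, hS, hU, hsum, hcomm⟩ := hT (scalarToUpperTriangular R n r)
  refine ⟨d S, d U, ?_, hU.map d, ?_, ?_⟩
  · have h1 := congrArg d hS
    rw [d.map_zero, Polynomial.eval_map, Polynomial.hom_eval₂] at h1
    rw [← h1, Polynomial.eval₂_eq_sum, Polynomial.eval_eq_sum, Polynomial.sum,
      Polynomial.sum]
    exact Finset.sum_congr rfl (fun i _ => by rw [RingHom.comp_apply, hdφ])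
  · have h2 := congrArg d hsum
    rwa [d.map_add, hdφ] at h2
  · have h3 := congrArg d hcomm
    rwa [d.map_mul, d.map_mul] at h3
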